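/- Grönwall-type matrix comparison: Let A be Metzler and let v : [0,∞) → ℝ^m satisfy v(t) = v(0) + ∫_0^t u(s) ds with u(s) ≤ A v(s) componentwise for all s. Then v(t) ≤ e^{At} v(0) componentwise for all t ≥ 0. -/

import Mathlib

open MeasureTheory intervalIntegral Set

section GronwallAux

variable {m : ℕ}

/-- Entry of `exp(t•A)·v0` has derivative `(A·exp(t•A)·v0)ᵢ`. -/
lemma gron_exp_entry_hasDerivAt (A : Matrix (Fin m) (Fin m) ℝ) (v0 : Fin m → ℝ)
    (i : Fin m) (t : ℝ) :
    HasDerivAt (fun s : ℝ => ((NormedSpace.exp (s • A)).mulVec v0) i)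
      ((A.mulVec ((NormedSpace.exp (t • A)).mulVec v0)) i) t := by
  letI : SeminormedRing (Matrix (Fin m) (Fin m) ℝ) := Matrix.linftyOpSemiNormedRing
  letI : NormedRing (Matrix (Fin m) (Fin m) ℝ) := Matrix.linftyOpNormedRing
  letI : NormedAlgebra ℝ (Matrix (Fin m) (Fin m) ℝ) := Matrix.linftyOpNormedAlgebra
  have h := hasDerivAt_exp_smul_const' (𝕂 := ℝ) A t
  let L : Matrix (Fin m) (Fin m) ℝ →ₗ[ℝ] ℝ :=
    { toFun := fun M => (M.mulVec v0) i
      map_add' := by intro M N; simp [Matrix.add_mulVec]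
      map_smul' := by intro c M; simp [Matrix.smul_mulVec] }
  have hL := (LinearMap.toContinuousLinearMap L).hasFDerivAt
    (x := NormedSpace.exp (t • A))
  have := hL.comp_hasDerivAt t h
  rw [Matrix.mulVec_mulVec]
  exact this

/-- The main ε-strict comparison lemma. -/
lemma gronwall_aux (A : Matrix (Fin m) (Fin m) ℝ)
    (hMetzler : ∀ i j : Fin m, i ≠ j → 0 ≤ A i j)
    (v u : ℝ → Fin m → ℝ)
    (hint : ∀ t : ℝ, 0 ≤ t → IntervalIntegrable u volume 0 t)
    (hv : ∀ t : ℝ, 0 ≤ t → v t = v 0 + ∫ s in (0:ℝ)..t, u s)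
    (hu : ∀ s : ℝ, 0 ≤ s → u s ≤ A.mulVec (v s))
    (K lam : ℝ) (hK0 : 0 ≤ K) (hKd : ∀ j, -K ≤ A j j)
    (hlam : ∀ j, (∑ k, A j k) + 1 ≤ lam) (hlam0 : 0 ≤ lam)
    (T : ℝ) (hT : 0 ≤ T) (ε : ℝ) (hε : 0 < ε) (i : Fin m) :
    v T i < ((NormedSpace.exp (T • A)).mulVec (v 0)) i + ε * Real.exp (lam * T) := by
  classical
  set E : ℝ → Fin m → ℝ := fun t => (NormedSpace.exp (t • A)).mulVec (v 0) with hE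
  have hEd : ∀ (j : Fin m) (t : ℝ),
      HasDerivAt (fun s => E s j) ((A.mulVec (E t)) j) t :=
    fun j t => gron_exp_entry_hasDerivAt A (v 0) j t
  have hEc : ∀ j : Fin m, Continuous fun t => E t j := fun j =>
    continuous_iff_continuousAt.2 fun t => (hEd j t).continuousAt
  have hAEc : ∀ j : Fin m, Continuous fun t => (A.mulVec (E t)) j := by
    intro j
    simp only [Matrix.mulVec, dotProduct]
    exact continuous_finset_sum _ fun k _ => continuous_const.mul (hEc k)
  have hE0 : ∀ j, E 0 j = v 0 j := by
    intro j
    simp [hE, Matrix.one_mulVec]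
  -- FTC for E
  have hEeq : ∀ (j : Fin m) (t : ℝ),
      E t j = v 0 j + ∫ s in (0:ℝ)..t, (A.mulVec (E s)) j := by
    intro j t
    have h := intervalIntegral.integral_eq_sub_of_hasDerivAt
      (f := fun s => E s j) (f' := fun s => (A.mulVec (E s)) j)
      (fun x _ => hEd j x) ((hAEc j).intervalIntegrable 0 t)
    have h' : (∫ s in (0:ℝ)..t, (A.mulVec (E s)) j) = E t j - E 0 j := h
    rw [hE0 j] at h'
    linarith [h']
  -- FTC for the scalar exponential
  have hexp : ∀ t : ℝ,
      ε * Real.exp (lam * t) = ε + ∫ s in (0:ℝ)..t, ε * lam * Real.exp (lam * s) := by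
    intro t
    have hd : ∀ s : ℝ, HasDerivAt (fun r : ℝ => ε * Real.exp (lam * r))
        (ε * lam * Real.exp (lam * s)) s := by
      intro s
      have h1 : HasDerivAt (fun r : ℝ => lam * r) lam s := by
        simpa using (hasDerivAt_id s).const_mul lam
      have h2 := ((Real.hasDerivAt_exp (lam * s)).comp s h1).const_mul ε
      exact h2.congr_deriv (by ring)
    have hc : Continuous fun s : ℝ => ε * lam * Real.exp (lam * s) := by fun_prop
    have h := intervalIntegral.integral_eq_sub_of_hasDerivAt
      (f := fun r : ℝ => ε * Real.exp (lam * r))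
      (fun x _ => hd x) (hc.intervalIntegrable 0 t)
    rw [h]; simp [Real.exp_zero]
  -- componentwise integral representation of v
  have hvj : ∀ t : ℝ, 0 ≤ t → ∀ j, v t j = v 0 j + ∫ s in (0:ℝ)..t, u s j := by
    intro t ht j
    have h := congrFun (hv t ht) j
    rw [Pi.add_apply] at h
    rw [h]
    congr 1
    exact ((ContinuousLinearMap.proj (R := ℝ) (φ := fun _ : Fin m => ℝ) j).intervalIntegral_comp_comm
      (hint t ht)).symm
  have huj : ∀ j : Fin m, IntervalIntegrable (fun s => u s j) volume 0 T := by
    intro j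
    exact ⟨(ContinuousLinearMap.proj (R := ℝ) (φ := fun _ : Fin m => ℝ) j).integrable_comp
        (hint T hT).1,
      (ContinuousLinearMap.proj (R := ℝ) (φ := fun _ : Fin m => ℝ) j).integrable_comp
        (hint T hT).2⟩
  -- the integrand
  set f : ℝ → Fin m → ℝ :=
    fun t j => (A.mulVec (E t)) j + ε * lam * Real.exp (lam * t) - u t j with hf
  have hujsub : ∀ (j : Fin m) (a b : ℝ), a ∈ Icc 0 T → b ∈ Icc 0 T →
      IntervalIntegrable (fun s => u s j) volume a b := by
    intro j a b ha hb
    refine (huj j).mono_set ?_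
    rw [uIcc_of_le hT]
    exact uIcc_subset_Icc ha hb
  have hfint : ∀ (j : Fin m) (a b : ℝ), a ∈ Icc 0 T → b ∈ Icc 0 T →
      IntervalIntegrable (fun s => f s j) volume a b := by
    intro j a b ha hb
    have hc : Continuous fun s => (A.mulVec (E s)) j + ε * lam * Real.exp (lam * s) := by
      exact (hAEc j).add (by fun_prop)
    exact (hc.intervalIntegrable a b).sub (hujsub j a b ha hb)
  -- the gap function
  set D : ℝ → Fin m → ℝ :=
    fun t j => E t j + ε * Real.exp (lam * t) - v t j with hD
  have hD0 : ∀ j, D 0 j = ε := by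
    intro j
    simp [hD, hE0 j, Real.exp_zero]
  have hDformula : ∀ t ∈ Icc (0:ℝ) T, ∀ j,
      D t j = ε + ∫ s in (0:ℝ)..t, f s j := by
    intro t ht j
    have h1 : IntervalIntegrable (fun s => (A.mulVec (E s)) j) volume 0 t :=
      (hAEc j).intervalIntegrable 0 t
    have h2 : IntervalIntegrable (fun s => ε * lam * Real.exp (lam * s)) volume 0 t := by
      apply Continuous.intervalIntegrable; fun_prop
    have h3 : IntervalIntegrable (fun s => u s j) volume 0 t :=
      hujsub j 0 t ⟨le_refl _, hT⟩ ht
    have : (∫ s in (0:ℝ)..t, f s j)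
        = (∫ s in (0:ℝ)..t, (A.mulVec (E s)) j) + (∫ s in (0:ℝ)..t, ε * lam * Real.exp (lam * s))
          - ∫ s in (0:ℝ)..t, u s j := by
      rw [← intervalIntegral.integral_add h1 h2, ← intervalIntegral.integral_sub (h1.add h2) h3]
    rw [hD, this]
    have hEt := hEeq j t
    have hex := hexp t
    have hvt := hvj t ht.1 j
    simp only
    rw [hEt, hex, hvt]
    ring
  -- pointwise lower bound on the integrand
  have hfge : ∀ r ∈ Icc (0:ℝ) T, (∀ k, 0 ≤ D r k) → ∀ j,
      -K * D r j + ε ≤ f r j := by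
    intro r hr hDr j
    have h1 : u r j ≤ (A.mulVec (v r)) j := hu r hr.1 j
    have he : (1:ℝ) ≤ Real.exp (lam * r) := Real.one_le_exp (mul_nonneg hlam0 hr.1)
    have hAj : (∑ k, A j k) + 1 ≤ lam := hlam j
    have hsum : A j j * D r j ≤ ∑ k, A j k * D r k := by
      have h := Finset.sum_erase_add Finset.univ (fun k => A j k * D r k) (Finset.mem_univ j)
      beta_reduce at h
      have hpos : 0 ≤ ∑ k ∈ Finset.univ.erase j, A j k * D r k := by
        apply Finset.sum_nonneg
        intro k hk
        have hkj : j ≠ k := fun hjk => (Finset.mem_erase.1 hk).1 hjk.symm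
        exact mul_nonneg (hMetzler j k hkj) (hDr k)
      linarith [h, hpos]
    have hdiag : -K * D r j ≤ A j j * D r j :=
      mul_le_mul_of_nonneg_right (hKd j) (hDr j)
    have hmv : (A.mulVec (E r)) j - (A.mulVec (v r)) j
        = (∑ k, A j k * D r k) - ε * Real.exp (lam * r) * (∑ k, A j k) := by
      simp only [Matrix.mulVec, dotProduct, Finset.mul_sum, ← Finset.sum_sub_distrib]
      apply Finset.sum_congr rfl
      intro k _
      simp only [hD]
      ring
    have hK1 : ε * Real.exp (lam * r) * ((∑ k, A j k) + 1) ≤ ε * Real.exp (lam * r) * lam :=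
      mul_le_mul_of_nonneg_left hAj (by positivity)
    have hK2 : ε ≤ ε * Real.exp (lam * r) := le_mul_of_one_le_right hε.le he
    simp only [hf]
    linarith [h1, hmv, hsum, hdiag, hK1, hK2]
  -- continuity of D on [0,T]
  have hDcont : ∀ j, ContinuousOn (fun t => D t j) (Icc 0 T) := by
    intro j
    have hvc : ContinuousOn (fun t => v t j) (Icc 0 T) := by
      have hprim : ContinuousOn (fun t => v 0 j + ∫ s in (0:ℝ)..t, u s j) (Icc 0 T) := by
        apply continuousOn_const.add
        have := intervalIntegral.continuousOn_primitive_interval' (huj j)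
          (left_mem_uIcc (a := (0:ℝ)) (b := T))
        rwa [uIcc_of_le hT] at this
      exact hprim.congr fun t ht => hvj t ht.1 j
    exact (((hEc j).continuousOn).add (Continuous.continuousOn (by fun_prop))).sub hvc
  -- the bad set
  by_contra hcon
  push_neg at hcon
  set S : Set ℝ := {t | t ∈ Icc (0:ℝ) T ∧ ∃ j, D t j ≤ 0} with hS
  have hTS : T ∈ S := by
    refine ⟨⟨hT, le_refl T⟩, i, ?_⟩
    simp only [hD]
    linarith [hcon]
  have hSclosed : IsClosed S := by
    have : S = ⋃ j : Fin m, (Icc (0:ℝ) T ∩ (fun t => D t j) ⁻¹' Iic 0) := by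
      ext t
      simp only [hS, Set.mem_iUnion, Set.mem_inter_iff, Set.mem_preimage, Set.mem_Iic,
        Set.mem_setOf_eq]
      tauto
    rw [this]
    exact isClosed_iUnion_of_finite fun j =>
      (hDcont j).preimage_isClosed_of_isClosed isClosed_Icc isClosed_Iic
  have hbdd : BddBelow S := ⟨0, fun x hx => hx.1.1⟩
  set t₀ : ℝ := sInf S with ht₀
  have htS : t₀ ∈ S := hSclosed.csInf_mem ⟨T, hTS⟩ hbdd
  obtain ⟨⟨ht0, htT⟩, i₀, hDti⟩ := htS
  have htpos : 0 < t₀ := by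
    rcases lt_or_eq_of_le ht0 with h | h
    · exact h
    · exfalso
      rw [← h] at hDti
      rw [hD0 i₀] at hDti
      linarith
  have hlt : ∀ s : ℝ, 0 ≤ s → s < t₀ → ∀ j, 0 < D s j := by
    intro s hs hst j
    by_contra h
    push_neg at h
    have hmem : s ∈ S := ⟨⟨hs, le_trans hst.le htT⟩, j, h⟩
    have := csInf_le hbdd hmem
    rw [← ht₀] at this
    linarith
  have hnonneg : ∀ s ∈ Icc (0:ℝ) t₀, ∀ k, 0 ≤ D s k := by
    intro s hs k
    rcases lt_or_eq_of_le hs.2 with h | h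
    · exact (hlt s hs.1 h k).le
    · rw [h]
      have hsub : Ioo (0:ℝ) t₀ ⊆ Icc 0 T := fun r hr =>
        ⟨hr.1.le, le_trans hr.2.le htT⟩
      have tends : Filter.Tendsto (fun r => D r k) (nhdsWithin t₀ (Ioo 0 t₀)) (nhds (D t₀ k)) :=
        ((hDcont k) t₀ ⟨ht0, htT⟩).tendsto.mono_left (nhdsWithin_mono _ hsub)
      have hne : (nhdsWithin t₀ (Ioo 0 t₀)).NeBot := by
        rw [nhdsWithin_Ioo_eq_nhdsLT htpos]
        infer_instance
      refine ge_of_tendsto tends ?_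
      filter_upwards [self_mem_nhdsWithin] with r hr
      exact (hlt r hr.1.le hr.2 k).le
  -- extract a δ-neighborhood where D · i₀ is small
  have hct : ContinuousWithinAt (fun t => D t i₀) (Icc 0 T) t₀ :=
    (hDcont i₀) t₀ ⟨ht0, htT⟩
  have hc : (0:ℝ) < ε / (2 * (K + 1)) := by positivity
  obtain ⟨δ, hδ, hδ2⟩ := (Metric.continuousWithinAt_iff.1 hct) _ hc
  set s₀ : ℝ := max (t₀ - δ / 2) (t₀ / 2) with hs₀
  have hs₀lt : s₀ < t₀ := max_lt (by linarith) (by linarith)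
  have hs₀0 : 0 ≤ s₀ := le_trans (by linarith) (le_max_right _ _)
  have hsmall : ∀ r ∈ Icc s₀ t₀, D r i₀ ≤ ε / (2 * (K + 1)) := by
    intro r hr
    have hrIcc : r ∈ Icc (0:ℝ) T := ⟨le_trans hs₀0 hr.1, le_trans hr.2 htT⟩
    have h1 : t₀ - r ≤ δ / 2 := by
      have h2 : t₀ - δ / 2 ≤ s₀ := le_max_left _ _
      linarith [hr.1]
    have hdist : dist r t₀ < δ := by
      rw [Real.dist_eq, abs_of_nonpos (by linarith [hr.2])]
      linarith
    have := hδ2 hrIcc hdist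
    rw [Real.dist_eq] at this
    have h3 := (abs_lt.1 this).2
    calc D r i₀ = D r i₀ - D t₀ i₀ + D t₀ i₀ := by ring
      _ ≤ ε / (2 * (K + 1)) + 0 := add_le_add h3.le hDti
      _ = ε / (2 * (K + 1)) := add_zero _
  -- integral comparison on [s₀, t₀]
  have hs₀Icc : s₀ ∈ Icc (0:ℝ) T := ⟨hs₀0, le_trans hs₀lt.le htT⟩
  have ht₀Icc : t₀ ∈ Icc (0:ℝ) T := ⟨ht0, htT⟩
  have hint1 : IntervalIntegrable (fun s => f s i₀) volume 0 s₀ :=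
    hfint i₀ 0 s₀ ⟨le_refl _, hT⟩ hs₀Icc
  have hint2 : IntervalIntegrable (fun s => f s i₀) volume s₀ t₀ :=
    hfint i₀ s₀ t₀ hs₀Icc ht₀Icc
  have hadd := intervalIntegral.integral_add_adjacent_intervals hint1 hint2
  have hDs := hDformula s₀ hs₀Icc i₀
  have hDt := hDformula t₀ ht₀Icc i₀
  have hdiff : D t₀ i₀ - D s₀ i₀ = ∫ s in s₀..t₀, f s i₀ := by
    rw [hDs, hDt, ← hadd]; ring
  have hlow : ∀ r ∈ Icc s₀ t₀, ε / 2 ≤ f r i₀ := by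
    intro r hr
    have hrIcc : r ∈ Icc (0:ℝ) T := ⟨le_trans hs₀0 hr.1, le_trans hr.2 htT⟩
    have h := hfge r hrIcc (fun k => hnonneg r ⟨le_trans hs₀0 hr.1, hr.2⟩ k) i₀
    have h2 := hsmall r hr
    have h3 : K * D r i₀ ≤ K * (ε / (2 * (K + 1))) :=
      mul_le_mul_of_nonneg_left h2 hK0
    have hKp : (0:ℝ) < 2 * (K + 1) := by linarith
    have h4 : K * (ε / (2 * (K + 1))) ≤ ε / 2 := by
      rw [← mul_div_assoc, div_le_div_iff₀ hKp two_pos]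
      nlinarith [hε.le, hK0]
    calc ε / 2 = -(ε / 2) + ε := by ring
      _ ≤ -(K * (ε / (2 * (K + 1)))) + ε := (add_le_add_iff_right ε).2 (neg_le_neg h4)
      _ ≤ -(K * D r i₀) + ε := (add_le_add_iff_right ε).2 (neg_le_neg h3)
      _ = -K * D r i₀ + ε := by ring
      _ ≤ f r i₀ := h
  have hmono := intervalIntegral.integral_mono_on hs₀lt.le
    (_root_.intervalIntegrable_const (c := ε / 2)) hint2 hlow
  rw [intervalIntegral.integral_const, smul_eq_mul] at hmono
  have hpos : 0 < (t₀ - s₀) * (ε / 2) := mul_pos (by linarith) (by linarith)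
  have hDspos : 0 < D s₀ i₀ := hlt s₀ hs₀0 hs₀lt i₀
  linarith [hdiff, hmono, hpos, hDspos, hDti]

end GronwallAux

/-- Grönwall-type matrix comparison (integral form): if `A` is Metzler and
`v(t) = v(0) + ∫_0^t u(s) ds` with `u(s) ≤ A v(s)` componentwise, then
`v(t) ≤ e^{At} v(0)` componentwise for all `t ≥ 0`. -/
theorem gronwall_matrix_comparison {m : ℕ} (A : Matrix (Fin m) (Fin m) ℝ)
    (hMetzler : ∀ i j : Fin m, i ≠ j → 0 ≤ A i j)
    (v u : ℝ → Fin m → ℝ)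
    (hint : ∀ t : ℝ, 0 ≤ t → IntervalIntegrable u volume 0 t)
    (hv : ∀ t : ℝ, 0 ≤ t → v t = v 0 + ∫ s in (0:ℝ)..t, u s)
    (hu : ∀ s : ℝ, 0 ≤ s → u s ≤ A.mulVec (v s)) :
    ∀ t : ℝ, 0 ≤ t → v t ≤ (NormedSpace.exp (t • A)).mulVec (v 0) := by
  intro t ht i
  set K : ℝ := ∑ j, |A j j| with hK
  set lam : ℝ := (∑ j, ∑ k, |A j k|) + 1 with hlam
  have hK0 : 0 ≤ K := Finset.sum_nonneg fun j _ => abs_nonneg _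
  have hKd : ∀ j, -K ≤ A j j := by
    intro j
    have h1 : |A j j| ≤ K :=
      Finset.single_le_sum (fun k _ => abs_nonneg (A k k)) (Finset.mem_univ j)
    have := neg_abs_le (A j j)
    linarith
  have hlamge : ∀ j, (∑ k, A j k) + 1 ≤ lam := by
    intro j
    have h1 : (∑ k, A j k) ≤ ∑ k, |A j k| :=
      Finset.sum_le_sum fun k _ => le_abs_self _
    have h2 : (∑ k, |A j k|) ≤ ∑ j', ∑ k, |A j' k| :=
      Finset.single_le_sum (f := fun j' => ∑ k, |A j' k|)
        (fun j' _ => Finset.sum_nonneg fun k _ => abs_nonneg _) (Finset.mem_univ j)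
    rw [hlam]
    linarith
  have hlam0 : 0 ≤ lam := by
    rw [hlam]
    have : (0:ℝ) ≤ ∑ j, ∑ k, |A j k| :=
      Finset.sum_nonneg fun j _ => Finset.sum_nonneg fun k _ => abs_nonneg _
    linarith
  refine le_of_forall_pos_le_add fun ε hε => ?_
  have hε' : 0 < ε / Real.exp (lam * t) := by positivity
  have h := gronwall_aux A hMetzler v u hint hv hu K lam hK0 hKd hlamge hlam0
    t ht (ε / Real.exp (lam * t)) hε' i
  have hne : Real.exp (lam * t) ≠ 0 := (Real.exp_pos _).ne'
  rw [div_mul_cancel₀ _ hne] at h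
  exact h.le
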